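/- Let p ≥ q ≥ 1 be integers, n = p+q, and t ∈ ℝ^q. Then the matrix exponential of H_t equals the block matrix [[C_p(t), S_{p×q}(t)],[S_{q×p}(t), C_q(t)]], where C_p(t) ∈ M_p(ℝ) is the diagonal matrix with diagonal entries cosh t₁, …, cosh t_q, 1, …, 1; C_q(t) ∈ M_q(ℝ) is the diagonal matrix with entries cosh t₁, …, cosh t_q; S_{p×q}(t) ∈ M_{p,q}(ℝ) has (r,r) entry sinh t_r for 1 ≤ r ≤ q and all other entries 0; and S_{q×p}(t) is its transpose. -/

import Mathlib

open scoped Nat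


open Matrix

namespace stmt19

variable (p q : ℕ)

/-- The matrix `H_t = [[0, t_{p×q}],[t_{q×p}, 0]] ∈ M_{p+q}(ℝ)` for `t ∈ ℝ^q`. -/
def Ht (t : Fin q → ℝ) : Matrix (Fin p ⊕ Fin q) (Fin p ⊕ Fin q) ℝ :=
  Matrix.fromBlocks 0
    (Matrix.of fun (i : Fin p) (j : Fin q) => if (i : ℕ) = (j : ℕ) then t j else 0)
    (Matrix.of fun (i : Fin q) (j : Fin p) => if (i : ℕ) = (j : ℕ) then t i else 0) 0

/-- `C_p(t)`: the diagonal `p×p` matrix with entries `cosh t₁, …, cosh t_q, 1, …, 1`. -/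
noncomputable def Cp (t : Fin q → ℝ) : Matrix (Fin p) (Fin p) ℝ :=
  Matrix.diagonal fun i : Fin p => if h : (i : ℕ) < q then Real.cosh (t ⟨(i : ℕ), h⟩) else 1

/-- `C_q(t)`: the diagonal `q×q` matrix with entries `cosh t₁, …, cosh t_q`. -/
noncomputable def Cq (t : Fin q → ℝ) : Matrix (Fin q) (Fin q) ℝ :=
  Matrix.diagonal fun j : Fin q => Real.cosh (t j)

/-- `S_{p×q}(t)`: the `p×q` matrix with `(r,r)` entry `sinh t_r` and other entries `0`. -/
noncomputable def Spq (t : Fin q → ℝ) : Matrix (Fin p) (Fin q) ℝ :=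
  Matrix.of fun (i : Fin p) (j : Fin q) => if (i : ℕ) = (j : ℕ) then Real.sinh (t j) else 0

end stmt19

namespace myaux
open stmt19

variable (p q : ℕ) (t : Fin q → ℝ)

def dd : Fin p ⊕ Fin q → ℝ :=
  Sum.elim (fun i => if h : (i : ℕ) < q then t ⟨(i : ℕ), h⟩ else 0) t

theorem Ht_mul_Ht (hpq : q ≤ p) :
    Ht p q t * Ht p q t = Matrix.diagonal (fun x => dd p q t x ^ 2) := by
  rw [Ht, fromBlocks_multiply]
  simp only [Matrix.zero_mul, Matrix.mul_zero, zero_add, add_zero]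
  have hAB : (Matrix.of fun (i : Fin p) (j : Fin q) => if (i : ℕ) = (j : ℕ) then t j else 0) *
      (Matrix.of fun (i : Fin q) (j : Fin p) => if (i : ℕ) = (j : ℕ) then t i else 0) =
      Matrix.diagonal (fun i : Fin p => dd p q t (Sum.inl i) ^ 2) := by
    ext i i'
    simp only [mul_apply, of_apply, diagonal_apply]
    by_cases h : (i : ℕ) < q
    · rw [Finset.sum_eq_single (⟨(i : ℕ), h⟩ : Fin q)]
      · by_cases hii : i = i'
        · subst hii
          simp [dd, dif_pos h, sq]
        · rw [if_neg hii, if_pos rfl, if_neg (by simpa [Fin.val_inj] using hii), mul_zero]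
      · intro b _ hb
        rw [if_neg (fun hc => hb (Fin.ext hc.symm)), zero_mul]
      · simp
    · rw [Finset.sum_eq_zero, eq_comm]
      · simp only [dd, Sum.elim_inl, dif_neg h]
        simp
      · intro j _
        rw [if_neg (fun hc => h (lt_of_le_of_lt (le_of_eq hc) j.2)), zero_mul]
  have hBA : (Matrix.of fun (i : Fin q) (j : Fin p) => if (i : ℕ) = (j : ℕ) then t i else 0) *
      (Matrix.of fun (i : Fin p) (j : Fin q) => if (i : ℕ) = (j : ℕ) then t j else 0) =
      Matrix.diagonal (fun j : Fin q => dd p q t (Sum.inr j) ^ 2) := by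
    ext j j'
    simp only [mul_apply, of_apply, diagonal_apply]
    rw [Finset.sum_eq_single (⟨(j : ℕ), lt_of_lt_of_le j.2 hpq⟩ : Fin p)]
    · by_cases hjj : j = j'
      · subst hjj
        simp [dd, sq]
      · rw [if_neg hjj, if_pos rfl, if_neg (by simpa [Fin.val_inj] using hjj), mul_zero]
    · intro b _ hb
      rw [if_neg (fun hc => hb (Fin.ext hc.symm)), zero_mul]
    · simp
  rw [hAB, hBA, fromBlocks_diagonal]
  congr 1
  ext (i | j) <;> rfl

theorem Ht_pow_even (hpq : q ≤ p) (k : ℕ) :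
    Ht p q t ^ (2 * k) = Matrix.diagonal (fun x => dd p q t x ^ (2 * k)) := by
  induction k with
  | zero => simp
  | succ k ih =>
    have : 2 * (k + 1) = 2 * k + 2 := by ring
    rw [this, pow_add, ih, sq, Ht_mul_Ht p q t hpq, diagonal_mul_diagonal]
    exact congrArg Matrix.diagonal (funext fun x => (pow_add _ _ _).symm)

theorem Ht_pow_odd (hpq : q ≤ p) (k : ℕ) :
    Ht p q t ^ (2 * k + 1) =
      Matrix.diagonal (fun x => dd p q t x ^ (2 * k)) * Ht p q t := by
  rw [pow_succ, Ht_pow_even p q t hpq k]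

end myaux



/-- The matrix exponential of `H_t` equals the block matrix
`[[C_p(t), S_{p×q}(t)],[S_{p×q}(t)ᵀ, C_q(t)]]`. -/
theorem stmt_19 (p q : ℕ) (hq : 1 ≤ q) (hpq : q ≤ p) (t : Fin q → ℝ) :
    NormedSpace.exp (stmt19.Ht p q t) =
      Matrix.fromBlocks (stmt19.Cp p q t) (stmt19.Spq p q t)
        (stmt19.Spq p q t)ᵀ (stmt19.Cq q t) := by
  rw [NormedSpace.exp_eq_tsum (𝕂 := ℝ)]
  refine HasSum.tsum_eq ?_
  have heven : HasSum (fun k : ℕ => ((2 * k)! : ℝ)⁻¹ • stmt19.Ht p q t ^ (2 * k))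
      (Matrix.diagonal fun x => Real.cosh (myaux.dd p q t x)) := by
    simp_rw [myaux.Ht_pow_even p q t hpq]
    have h1 : HasSum (fun k : ℕ => fun x => ((2 * k)! : ℝ)⁻¹ • myaux.dd p q t x ^ (2 * k))
        (fun x => Real.cosh (myaux.dd p q t x)) := by
      rw [Pi.hasSum]
      intro x
      convert Real.hasSum_cosh (myaux.dd p q t x) using 2 with k
      rw [smul_eq_mul, ← div_eq_inv_mul]
    convert h1.matrix_diagonal using 2 with k
    rw [← Matrix.diagonal_smul]
    rfl
  have hodd : HasSum (fun k : ℕ => ((2 * k + 1)! : ℝ)⁻¹ • stmt19.Ht p q t ^ (2 * k + 1))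
      (Matrix.fromBlocks 0 (stmt19.Spq p q t) (stmt19.Spq p q t)ᵀ 0) := by
    simp_rw [myaux.Ht_pow_odd p q t hpq]
    refine Pi.hasSum.mpr ?_
    intro x
    rw [Pi.hasSum]
    intro y
    have hterm : ∀ k : ℕ, (((2 * k + 1)! : ℝ)⁻¹ •
        (Matrix.diagonal (fun x => myaux.dd p q t x ^ (2 * k)) * stmt19.Ht p q t)) x y
        = ((2 * k + 1)! : ℝ)⁻¹ * (myaux.dd p q t x ^ (2 * k) * stmt19.Ht p q t x y) := by
      intro k
      rw [Matrix.smul_apply, Matrix.diagonal_mul, smul_eq_mul]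
    simp_rw [hterm]
    rcases x with i | j <;> rcases y with i' | j'
    · simp [stmt19.Ht, hasSum_zero]
    · by_cases hij : (i : ℕ) = (j' : ℕ)
      · have hi : (i : ℕ) < q := hij ▸ j'.2
        have hddi : myaux.dd p q t (Sum.inl i) = t j' := by
          simp only [myaux.dd, Sum.elim_inl, dif_pos hi]
          congr 1
          exact Fin.ext hij
        simp only [stmt19.Ht, Matrix.fromBlocks_apply₁₂, Matrix.of_apply, if_pos hij, hddi,
          stmt19.Spq]
        convert Real.hasSum_sinh (t j') using 2 with k
        rw [← pow_succ, ← div_eq_inv_mul]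
      · simp only [stmt19.Ht, Matrix.fromBlocks_apply₁₂, Matrix.of_apply, if_neg hij,
          stmt19.Spq, mul_zero]
        simpa using (hasSum_zero : HasSum (fun _ : ℕ => (0:ℝ)) 0)
    · by_cases hij : (j : ℕ) = (i' : ℕ)
      · simp only [stmt19.Ht, Matrix.fromBlocks_apply₂₁, Matrix.of_apply, if_pos hij,
          myaux.dd, Sum.elim_inr, stmt19.Spq, Matrix.transpose_apply, if_pos hij.symm]
        convert Real.hasSum_sinh (t j) using 2 with k
        rw [← pow_succ, ← div_eq_inv_mul]
      · simp only [stmt19.Ht, Matrix.fromBlocks_apply₂₁, Matrix.of_apply, if_neg hij,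
          stmt19.Spq, Matrix.transpose_apply, if_neg (show ¬((i' : ℕ) = (j : ℕ)) from fun h => hij h.symm), mul_zero]
        simpa using (hasSum_zero : HasSum (fun _ : ℕ => (0:ℝ)) 0)
    · simp [stmt19.Ht, hasSum_zero]
  have hsum := HasSum.even_add_odd
    (f := fun n : ℕ => ((n)! : ℝ)⁻¹ • stmt19.Ht p q t ^ n) heven hodd
  convert hsum using 1
  · rfl
  have hE : (Matrix.diagonal fun x => Real.cosh (myaux.dd p q t x)) =
      Matrix.fromBlocks (stmt19.Cp p q t) 0 0 (stmt19.Cq q t) := by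
    rw [stmt19.Cp, stmt19.Cq, Matrix.fromBlocks_diagonal]
    refine congrArg Matrix.diagonal (funext fun x => ?_)
    rcases x with i | j
    · simp only [Sum.elim_inl, myaux.dd]
      split_ifs with h <;> simp
    · rfl
  rw [hE, Matrix.fromBlocks_add]
  simp
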